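/- Let A ≅ B ×_D C be a fiber product of rings with l : C → D surjective. Given bounded chain complexes (M, d_M) of finitely generated projective B-modules and (N, d_N) of finitely generated projective C-modules, and an isomorphism of chain complexes of D-modules α : M ⊗_B D ≅ N ⊗_C D, the complex ker(M ⊕ N → N ⊗_C D) with differential d_M ⊕ d_N is a bounded chain complex of finitely generated projective A-modules. -/

import Mathlib

open TensorProduct

section Patch
variable (A : Type) {B C D : Type} [CommRing A] [CommRing B] [CommRing C] [CommRing D]
    [Algebra A B] [Algebra A C] [Algebra A D] [Algebra B D] [Algebra C D]
    [IsScalarTower A B D] [IsScalarTower A C D]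

variable {M N M' N' : Type}
    [AddCommGroup M] [AddCommGroup N] [AddCommGroup M'] [AddCommGroup N']
    [Module B M] [Module C N] [Module A M] [Module A N]
    [IsScalarTower A B M] [IsScalarTower A C N]
    [Module B M'] [Module C N'] [Module A M'] [Module A N']
    [IsScalarTower A B M'] [IsScalarTower A C N']

lemma one_tmul_smulB (a : A) (m : M) :
    (1 : D) ⊗ₜ[B] (a • m) = (algebraMap A D a) • ((1 : D) ⊗ₜ[B] m) := by
  rw [← algebraMap_smul B a m, ← TensorProduct.smul_tmul, algebraMap_smul, algebraMap_smul]
  exact (TensorProduct.smul_tmul' a (1 : D) m).symm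

lemma one_tmul_smulC (a : A) (n : N) :
    (1 : D) ⊗ₜ[C] (a • n) = (algebraMap A D a) • ((1 : D) ⊗ₜ[C] n) := by
  rw [← algebraMap_smul C a n, ← TensorProduct.smul_tmul, algebraMap_smul, algebraMap_smul]
  exact (TensorProduct.smul_tmul' a (1 : D) n).symm

/-- The Milnor patching kernel. -/
def pker (h : (D ⊗[B] M) ≃ₗ[D] (D ⊗[C] N)) : Submodule A (M × N) where
  carrier := {p | h ((1 : D) ⊗ₜ[B] p.1) = (1 : D) ⊗ₜ[C] p.2}
  add_mem' := by
    intro p q hp hq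
    simp only [Set.mem_setOf_eq, Prod.fst_add, Prod.snd_add, TensorProduct.tmul_add,
      map_add] at *
    rw [hp, hq]
  zero_mem' := by simp
  smul_mem' := by
    intro a p hp
    simp only [Set.mem_setOf_eq, Prod.smul_fst, Prod.smul_snd,
      one_tmul_smulB A (D := D) a, one_tmul_smulC A (D := D) a, map_smul] at *
    rw [hp]

lemma mem_pker {h : (D ⊗[B] M) ≃ₗ[D] (D ⊗[C] N)} {p : M × N} :
    p ∈ pker A h ↔ h ((1 : D) ⊗ₜ[B] p.1) = (1 : D) ⊗ₜ[C] p.2 := Iff.rfl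

/-- Transport of patching kernels along isomorphisms. -/
noncomputable def pkerCongr (e : M ≃ₗ[B] M') (f : N ≃ₗ[C] N')
    (h : (D ⊗[B] M) ≃ₗ[D] (D ⊗[C] N)) (h' : (D ⊗[B] M') ≃ₗ[D] (D ⊗[C] N'))
    (hc : ∀ (m : M) (n : N), h ((1:D) ⊗ₜ[B] m) = (1:D) ⊗ₜ[C] n ↔
      h' ((1:D) ⊗ₜ[B] e m) = (1:D) ⊗ₜ[C] f n) :
    pker A h ≃ₗ[A] pker A h' := by
  refine (LinearEquiv.submoduleMap
    (LinearEquiv.prodCongr (e.restrictScalars A) (f.restrictScalars A)) (pker A h)).trans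
    (LinearEquiv.ofEq _ _ ?_)
  ext p
  constructor
  · rintro ⟨q, hq, rfl⟩
    exact (hc q.1 q.2).1 hq
  · intro hp
    refine ⟨(e.symm p.1, f.symm p.2), ?_, by simp⟩
    show h ((1:D) ⊗ₜ[B] (e.symm p.1)) = (1:D) ⊗ₜ[C] (f.symm p.2)
    rw [hc]
    simpa using (mem_pker A).1 hp


/-- product decomposition -/
noncomputable def pkerProd
    (h : (D ⊗[B] M) ≃ₗ[D] (D ⊗[C] N)) (h' : (D ⊗[B] M') ≃ₗ[D] (D ⊗[C] N'))
    (H : (D ⊗[B] (M × M')) ≃ₗ[D] (D ⊗[C] (N × N')))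
    (hc : ∀ (m : M) (m' : M') (n : N) (n' : N'),
      H ((1:D) ⊗ₜ[B] (m, m')) = (1:D) ⊗ₜ[C] (n, n') ↔
        (h ((1:D) ⊗ₜ[B] m) = (1:D) ⊗ₜ[C] n ∧ h' ((1:D) ⊗ₜ[B] m') = (1:D) ⊗ₜ[C] n')) :
    pker A H ≃ₗ[A] (pker A h × pker A h') where
  toFun x := (⟨(x.1.1.1, x.1.2.1), ((hc _ _ _ _).1 x.2).1⟩,
              ⟨(x.1.1.2, x.1.2.2), ((hc _ _ _ _).1 x.2).2⟩)
  invFun y := ⟨((y.1.1.1, y.2.1.1), (y.1.1.2, y.2.1.2)),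
    (hc _ _ _ _).2 ⟨y.1.2, y.2.2⟩⟩
  left_inv x := rfl
  right_inv y := rfl
  map_add' x y := rfl
  map_smul' a x := rfl


section Can
variable (B C D) (ι : Type) [Fintype ι] [DecidableEq ι]

noncomputable def pcan : (D ⊗[B] (ι → B)) ≃ₗ[D] (D ⊗[C] (ι → C)) :=
  (TensorProduct.piScalarRight B D D ι).trans (TensorProduct.piScalarRight C D D ι).symm

lemma pcan_iff (m : ι → B) (n : ι → C) :
    pcan B C D ι ((1:D) ⊗ₜ[B] m) = (1:D) ⊗ₜ[C] n ↔
      ∀ i, algebraMap B D (m i) = algebraMap C D (n i) := by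
  rw [pcan, LinearEquiv.trans_apply, LinearEquiv.symm_apply_eq]
  simp only [TensorProduct.piScalarRight_apply, TensorProduct.piScalarRightHom_tmul]
  rw [funext_iff]
  refine forall_congr' fun i => ?_
  rw [Algebra.algebraMap_eq_smul_one, Algebra.algebraMap_eq_smul_one]

end Can

section CanKer
variable {ι : Type} [Fintype ι] [DecidableEq ι]
variable (hfib : ∀ (b : B) (c : C), algebraMap B D b = algebraMap C D c →
      ∃! a : A, algebraMap A B a = b ∧ algebraMap A C a = c)

noncomputable def canMap : (ι → A) →ₗ[A] ((ι → B) × (ι → C)) where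
  toFun a := (fun i => algebraMap A B (a i), fun i => algebraMap A C (a i))
  map_add' a a' := by
    refine Prod.ext (funext fun i => ?_) (funext fun i => ?_) <;> simp
  map_smul' x a := by
    refine Prod.ext (funext fun i => ?_) (funext fun i => ?_) <;>
      simp [Algebra.smul_def, smul_eq_mul]

lemma canMap_mem (a : ι → A) : canMap A (B:=B) (C:=C) a ∈ pker A (pcan B C D ι) := by
  rw [mem_pker]
  rw [pcan_iff]
  intro i
  show algebraMap B D (algebraMap A B (a i)) = algebraMap C D (algebraMap A C (a i))
  rw [← IsScalarTower.algebraMap_apply, ← IsScalarTower.algebraMap_apply]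

noncomputable def pkerCanEquiv : (ι → A) ≃ₗ[A] pker A (pcan B C D ι) := by
  refine LinearEquiv.ofBijective
    ((canMap A (B:=B) (C:=C)).codRestrict (pker A (pcan B C D ι)) (canMap_mem A)) ⟨?_, ?_⟩
  · intro a a' hh
    have h1 : canMap A (B:=B) (C:=C) a = canMap A (B:=B) (C:=C) a' := congrArg Subtype.val hh
    funext i
    have hB : algebraMap A B (a i) = algebraMap A B (a' i) := congrFun (congrArg Prod.fst h1) i
    have hC : algebraMap A C (a i) = algebraMap A C (a' i) := congrFun (congrArg Prod.snd h1) i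
    obtain ⟨u, -, huniq⟩ := hfib (algebraMap A B (a i)) (algebraMap A C (a i))
      (by rw [← IsScalarTower.algebraMap_apply, ← IsScalarTower.algebraMap_apply])
    exact (huniq _ ⟨rfl, rfl⟩).trans (huniq _ ⟨hB.symm, hC.symm⟩).symm
  · rintro ⟨⟨m, n⟩, hmn⟩
    rw [mem_pker, pcan_iff] at hmn
    refine ⟨fun i => (hfib (m i) (n i) (hmn i)).exists.choose, ?_⟩
    apply Subtype.ext
    have := fun i => (hfib (m i) (n i) (hmn i)).exists.choose_spec
    exact Prod.ext (funext fun i => (this i).1) (funext fun i => (this i).2)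

end CanKer

section Shear
variable (R V : Type) [CommRing R] [AddCommGroup V] [Module R V]

/-- upper shear `(a,b) ↦ (a + x b, b)` -/
def shearU (x : V →ₗ[R] V) : (V × V) ≃ₗ[R] (V × V) :=
  LinearEquiv.ofLinear
    ((LinearMap.fst R V V + x ∘ₗ LinearMap.snd R V V).prod (LinearMap.snd R V V))
    ((LinearMap.fst R V V - x ∘ₗ LinearMap.snd R V V).prod (LinearMap.snd R V V))
    (by ext p <;> simp) (by ext p <;> simp)

@[simp] lemma shearU_apply (x : V →ₗ[R] V) (p : V × V) :
    shearU R V x p = (p.1 + x p.2, p.2) := rfl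

/-- lower shear `(a,b) ↦ (a, b + y a)` -/
def shearL (y : V →ₗ[R] V) : (V × V) ≃ₗ[R] (V × V) :=
  LinearEquiv.ofLinear
    ((LinearMap.fst R V V).prod (LinearMap.snd R V V + y ∘ₗ LinearMap.fst R V V))
    ((LinearMap.fst R V V).prod (LinearMap.snd R V V - y ∘ₗ LinearMap.fst R V V))
    (by ext p <;> simp) (by ext p <;> simp)

@[simp] lemma shearL_apply (y : V →ₗ[R] V) (p : V × V) :
    shearL R V y p = (p.1, p.2 + y p.1) := rfl

/-- `(a,b) ↦ (-b, a)` -/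
def swapNeg : (V × V) ≃ₗ[R] (V × V) :=
  LinearEquiv.ofLinear
    ((-LinearMap.snd R V V).prod (LinearMap.fst R V V))
    ((LinearMap.snd R V V).prod (-LinearMap.fst R V V))
    (by ext p <;> simp) (by ext p <;> simp)

@[simp] lemma swapNeg_apply (p : V × V) : swapNeg R V p = (-p.2, p.1) := rfl

end Shear

section Lift
variable {ι : Type} [Fintype ι] [DecidableEq ι]
variable (hsurj : Function.Surjective (algebraMap C D))
include hsurj

/-- componentwise reduction of a vector over `C` to a vector over `D` -/
def cvec (w : ι → C) : ι → D := fun i => algebraMap C D (w i)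

omit hsurj in
@[simp] lemma cvec_add (w w' : ι → C) :
    cvec (C:=C) (D:=D) (w + w') = cvec w + cvec w' := by funext i; simp [cvec]

omit hsurj in
@[simp] lemma cvec_sub (w w' : ι → C) :
    cvec (C:=C) (D:=D) (w - w') = cvec w - cvec w' := by funext i; simp [cvec]

omit hsurj in
@[simp] lemma cvec_neg (w : ι → C) : cvec (C:=C) (D:=D) (-w) = -cvec w := by
  funext i; simp [cvec]

lemma matLift (x : (ι → D) →ₗ[D] (ι → D)) :
    ∃ x' : (ι → C) →ₗ[C] (ι → C), ∀ w : ι → C, x (cvec w) = cvec (x' w) := by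
  classical
  set P := LinearMap.toMatrix' x with hP
  choose Q hQ using fun i j => hsurj (P i j)
  refine ⟨Matrix.toLin' (Matrix.of Q), fun w => ?_⟩
  have hx : x = Matrix.toLin' P := by rw [hP, Matrix.toLin'_toMatrix']
  rw [hx]
  funext i
  simp only [Matrix.toLin'_apply, Matrix.mulVec, dotProduct, cvec, Matrix.of_apply,
    map_sum, map_mul, hQ]

lemma liftPair (g : (ι → D) ≃ₗ[D] (ι → D)) :
    ∃ u : ((ι → C) × (ι → C)) ≃ₗ[C] ((ι → C) × (ι → C)),
      ∀ w : (ι → C) × (ι → C),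
        (g (cvec w.1), g.symm (cvec w.2)) = (cvec (C:=C) (D:=D) ((u w).1), cvec ((u w).2)) := by
  obtain ⟨g', hg'⟩ := matLift hsurj g.toLinearMap
  obtain ⟨gi', hgi'⟩ := matLift hsurj g.symm.toLinearMap
  refine ⟨(swapNeg C _).trans ((shearU C _ g').trans ((shearL C _ (-gi')).trans
    (shearU C _ g'))), fun w => ?_⟩
  simp only [LinearEquiv.trans_apply, swapNeg_apply, shearU_apply, shearL_apply,
    LinearMap.neg_apply]
  have e1 : cvec (C:=C) (D:=D) (-w.2 + g' w.1) = -cvec w.2 + g (cvec w.1) := by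
    simp [← hg']
  have e2 : cvec (C:=C) (D:=D) (w.1 + -gi' (-w.2 + g' w.1)) = g.symm (cvec w.2) := by
    have : cvec (C:=C) (D:=D) (gi' (-w.2 + g' w.1)) = g.symm (-cvec w.2 + g (cvec w.1)) := by
      rw [← e1, ← hgi']; rfl
    simp only [cvec_add, cvec_neg, this]
    simp [map_add, map_neg]
  refine Prod.ext ?_ e2.symm
  show g (cvec w.1) = cvec (C:=C) (D:=D) ((-w.2 + g' w.1) + g' (w.1 + -gi' (-w.2 + g' w.1)))
  rw [cvec_add, ← hg', e2, e1]
  simp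

end Lift

section TProd
variable (R X Y : Type) [CommRing R] [Algebra R D] [AddCommGroup X] [AddCommGroup Y]
  [Module R X] [Module R Y]

noncomputable def dxprod : (D ⊗[R] (X × Y)) ≃ₗ[D] ((D ⊗[R] X) × (D ⊗[R] Y)) :=
  LinearEquiv.ofLinear
    ((LinearMap.baseChange D (LinearMap.fst R X Y)).prod
      (LinearMap.baseChange D (LinearMap.snd R X Y)))
    (LinearMap.coprod (LinearMap.baseChange D (LinearMap.inl R X Y))
      (LinearMap.baseChange D (LinearMap.inr R X Y)))
    (by ext x <;> simp) (by ext x <;> simp)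

@[simp] lemma dxprod_tmul (d : D) (x : X) (y : Y) :
    dxprod R X Y (d ⊗ₜ[R] (x, y)) = (d ⊗ₜ[R] x, d ⊗ₜ[R] y) := rfl

end TProd

section Glue
variable {M N M' N' : Type}
    [AddCommGroup M] [AddCommGroup N] [AddCommGroup M'] [AddCommGroup N']
    [Module B M] [Module C N] [Module B M'] [Module C N']

noncomputable def pglue (h : (D ⊗[B] M) ≃ₗ[D] (D ⊗[C] N))
    (h' : (D ⊗[B] M') ≃ₗ[D] (D ⊗[C] N')) :
    (D ⊗[B] (M × M')) ≃ₗ[D] (D ⊗[C] (N × N')) :=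
  (dxprod B M M').trans ((h.prodCongr h').trans (dxprod C N N').symm)

lemma pglue_iff (h : (D ⊗[B] M) ≃ₗ[D] (D ⊗[C] N))
    (h' : (D ⊗[B] M') ≃ₗ[D] (D ⊗[C] N')) (m : M) (m' : M') (n : N) (n' : N') :
    pglue h h' ((1:D) ⊗ₜ[B] (m, m')) = (1:D) ⊗ₜ[C] (n, n') ↔
      (h ((1:D) ⊗ₜ[B] m) = (1:D) ⊗ₜ[C] n ∧ h' ((1:D) ⊗ₜ[B] m') = (1:D) ⊗ₜ[C] n') := by
  rw [pglue, LinearEquiv.trans_apply, LinearEquiv.trans_apply, LinearEquiv.symm_apply_eq]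
  simp [Prod.ext_iff]

end Glue

section Free
variable {ι : Type} [Fintype ι] [DecidableEq ι]

/-- componentwise reduction of a vector over `B` -/
def bvec (m : ι → B) : ι → D := fun i => algebraMap B D (m i)

lemma pis_one_tmul_B (m : ι → B) :
    TensorProduct.piScalarRight B D D ι ((1:D) ⊗ₜ[B] m) = bvec m := by
  funext i
  simp [bvec, Algebra.algebraMap_eq_smul_one]

lemma pis_one_tmul_C (n : ι → C) :
    TensorProduct.piScalarRight C D D ι ((1:D) ⊗ₜ[C] n) = cvec n := by
  funext i
  simp [cvec, Algebra.algebraMap_eq_smul_one]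

noncomputable def gOf (h : (D ⊗[B] (ι → B)) ≃ₗ[D] (D ⊗[C] (ι → C))) :
    (ι → D) ≃ₗ[D] (ι → D) :=
  (TensorProduct.piScalarRight B D D ι).symm.trans
    (h.trans (TensorProduct.piScalarRight C D D ι))

noncomputable def hbarOf (h : (D ⊗[B] (ι → B)) ≃ₗ[D] (D ⊗[C] (ι → C))) :
    (D ⊗[B] (ι → B)) ≃ₗ[D] (D ⊗[C] (ι → C)) :=
  (TensorProduct.piScalarRight B D D ι).trans
    ((gOf h).symm.trans (TensorProduct.piScalarRight C D D ι).symm)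

lemma memh (h : (D ⊗[B] (ι → B)) ≃ₗ[D] (D ⊗[C] (ι → C))) (m : ι → B) (n : ι → C) :
    h ((1:D) ⊗ₜ[B] m) = (1:D) ⊗ₜ[C] n ↔ gOf h (bvec m) = cvec n := by
  rw [← pis_one_tmul_B m, gOf]
  simp only [LinearEquiv.trans_apply, LinearEquiv.symm_apply_apply]
  rw [← pis_one_tmul_C n]
  exact ((TensorProduct.piScalarRight C D D ι).injective.eq_iff).symm

lemma memhbar (h : (D ⊗[B] (ι → B)) ≃ₗ[D] (D ⊗[C] (ι → C))) (m : ι → B) (n : ι → C) :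
    hbarOf h ((1:D) ⊗ₜ[B] m) = (1:D) ⊗ₜ[C] n ↔ (gOf h).symm (bvec m) = cvec n := by
  rw [hbarOf]
  simp only [LinearEquiv.trans_apply]
  rw [pis_one_tmul_B, LinearEquiv.symm_apply_eq, pis_one_tmul_C]

lemma memcan (m : ι → B) (n : ι → C) :
    pcan B C D ι ((1:D) ⊗ₜ[B] m) = (1:D) ⊗ₜ[C] n ↔ bvec m = cvec (D := D) n := by
  rw [pcan_iff, funext_iff]
  rfl

theorem pker_free_good
    (hfib : ∀ (b : B) (c : C), algebraMap B D b = algebraMap C D c →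
      ∃! a : A, algebraMap A B a = b ∧ algebraMap A C a = c)
    (hsurj : Function.Surjective (algebraMap C D))
    (h : (D ⊗[B] (ι → B)) ≃ₗ[D] (D ⊗[C] (ι → C))) :
    Module.Finite A (pker A h) ∧ Module.Projective A (pker A h) := by
  classical
  obtain ⟨u, hu⟩ := liftPair hsurj (gOf h)
  have hc : ∀ (m : (ι → B) × (ι → B)) (n : (ι → C) × (ι → C)),
      pglue h (hbarOf h) ((1:D) ⊗ₜ[B] m) = (1:D) ⊗ₜ[C] n ↔
        pglue (pcan B C D ι) (pcan B C D ι)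
            ((1:D) ⊗ₜ[B] ((LinearEquiv.refl B ((ι → B) × (ι → B))) m)) =
          (1:D) ⊗ₜ[C] (u.symm n) := by
    rintro ⟨m₁, m₂⟩ n
    have hun := hu (u.symm n)
    rw [u.apply_symm_apply] at hun
    have hun1 : gOf h (cvec (u.symm n).1) = cvec n.1 := congrArg Prod.fst hun
    have hun2 : (gOf h).symm (cvec (u.symm n).2) = cvec n.2 := congrArg Prod.snd hun
    rw [LinearEquiv.refl_apply]
    rw [show ((1:D) ⊗ₜ[B] (m₁, m₂)) = ((1:D) ⊗ₜ[B] (Prod.mk m₁ m₂)) from rfl]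
    rw [pglue_iff, pglue_iff, memh, memhbar, memcan, memcan]
    constructor
    · rintro ⟨h1, h2⟩
      constructor
      · apply (gOf h).injective
        rw [hun1, h1]
      · apply (gOf h).symm.injective
        rw [hun2, h2]
    · rintro ⟨h1, h2⟩
      exact ⟨by rw [h1, hun1], by rw [h2, hun2]⟩
  have E1 : pker A (pglue h (hbarOf h)) ≃ₗ[A]
      pker A (pglue (pcan B C D ι) (pcan B C D ι)) :=
    pkerCongr A (LinearEquiv.refl B _) u.symm _ _ hc
  have E2 : pker A (pglue (pcan B C D ι) (pcan B C D ι)) ≃ₗ[A]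
      (pker A (pcan B C D ι) × pker A (pcan B C D ι)) :=
    pkerProd A _ _ _ (pglue_iff _ _)
  have E3 : ((ι → A) × (ι → A)) ≃ₗ[A]
      (pker A (pcan B C D ι) × pker A (pcan B C D ι)) :=
    LinearEquiv.prodCongr (pkerCanEquiv A hfib) (pkerCanEquiv A hfib)
  have EH : pker A (pglue h (hbarOf h)) ≃ₗ[A] (pker A h × pker A (hbarOf h)) :=
    pkerProd A _ _ _ (pglue_iff _ _)
  have EE : ((ι → A) × (ι → A)) ≃ₗ[A] (pker A h × pker A (hbarOf h)) :=
    (E3.trans E2.symm).trans (E1.symm.trans EH)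
  constructor
  · have hfin : Module.Finite A (pker A h × pker A (hbarOf h)) := Module.Finite.equiv EE
    exact Module.Finite.of_surjective
      (LinearMap.fst A (pker A h) (pker A (hbarOf h))) Prod.fst_surjective
  · have hproj : Module.Projective A (pker A h × pker A (hbarOf h)) :=
      Module.Projective.of_equiv EE
    exact Module.Projective.of_split
      (LinearMap.inl A (pker A h) (pker A (hbarOf h)))
      (LinearMap.fst A (pker A h) (pker A (hbarOf h)))
      (by ext x <;> rfl)

end Free

section Main
variable {M N : Type}
    [AddCommGroup M] [AddCommGroup N]
    [Module B M] [Module C N] [Module A M] [Module A N]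
    [IsScalarTower A B M] [IsScalarTower A C N]

lemma lbc_tmul {R X Y : Type} [CommRing R] [Algebra R D] [AddCommGroup X] [AddCommGroup Y]
    [Module R X] [Module R Y] (e : X ≃ₗ[R] Y) (d : D) (x : X) :
    LinearEquiv.baseChange R D X Y e (d ⊗ₜ[R] x) = d ⊗ₜ[R] (e x) := by
  simp [LinearEquiv.baseChange]

/-- a 3-cycle permutation equivalence -/
def sw3 (R P Q S : Type) [Semiring R] [AddCommMonoid P] [AddCommMonoid Q] [AddCommMonoid S]
    [Module R P] [Module R Q] [Module R S] : (P × (Q × S)) ≃ₗ[R] (S × (Q × P)) where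
  toFun p := (p.2.2, (p.2.1, p.1))
  invFun p := (p.2.2, (p.2.1, p.1))
  left_inv p := rfl
  right_inv p := rfl
  map_add' p q := rfl
  map_smul' r p := rfl

/-- splitting equivalence from a split surjection -/
noncomputable def splitEquiv {R F X : Type} [CommRing R] [AddCommGroup F] [AddCommGroup X]
    [Module R F] [Module R X] (π : F →ₗ[R] X) (s : X →ₗ[R] F)
    (hs : ∀ x, π (s x) = x) : F ≃ₗ[R] (X × LinearMap.ker π) where
  toFun f := (π f, ⟨f - s (π f), by simp [LinearMap.mem_ker, hs]⟩)
  invFun p := s p.1 + p.2.1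
  left_inv f := by simp
  right_inv p := by
    have h2 := p.2.2
    rw [LinearMap.mem_ker] at h2
    ext
    · simp [hs, h2]
    · simp [hs, h2]
  map_add' f g := by ext <;> simp <;> abel
  map_smul' r f := by ext <;> simp [smul_sub]

set_option maxHeartbeats 1000000 in
theorem pker_good
    (hfib : ∀ (b : B) (c : C), algebraMap B D b = algebraMap C D c →
      ∃! a : A, algebraMap A B a = b ∧ algebraMap A C a = c)
    (hsurj : Function.Surjective (algebraMap C D))
    [Module.Finite B M] [Module.Projective B M]
    [Module.Finite C N] [Module.Projective C N]
    (h : (D ⊗[B] M) ≃ₗ[D] (D ⊗[C] N)) :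
    Module.Finite A (pker A h) ∧ Module.Projective A (pker A h) := by
  classical
  obtain ⟨nB, πB, hπB⟩ := Module.Finite.exists_fin' B M
  obtain ⟨sB, hsB⟩ := Module.projective_lifting_property πB LinearMap.id hπB
  obtain ⟨nC, πC, hπC⟩ := Module.Finite.exists_fin' C N
  obtain ⟨sC, hsC⟩ := Module.projective_lifting_property πC LinearMap.id hπC
  have hsB' : ∀ x, πB (sB x) = x := fun x => DFunLike.congr_fun hsB x
  have hsC' : ∀ x, πC (sC x) = x := fun x => DFunLike.congr_fun hsC x
  let eB : (Fin nB → B) ≃ₗ[B] (M × LinearMap.ker πB) := splitEquiv πB sB hsB'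
  let eC : (Fin nC → C) ≃ₗ[C] (N × LinearMap.ker πC) := splitEquiv πC sC hsC'
  let hrest : (D ⊗[B] (LinearMap.ker πB × (Fin nC → B))) ≃ₗ[D]
      (D ⊗[C] (LinearMap.ker πC × (Fin nB → C))) :=
    (dxprod B (LinearMap.ker πB) (Fin nC → B)).trans <|
    (LinearEquiv.prodCongr (LinearEquiv.refl D (D ⊗[B] (LinearMap.ker πB)))
      ((pcan B C D (Fin nC)).trans ((LinearEquiv.baseChange C D _ _ eC).trans
        (dxprod C N (LinearMap.ker πC))))).trans <|
    (LinearEquiv.prodCongr (LinearEquiv.refl D (D ⊗[B] (LinearMap.ker πB)))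
      (LinearEquiv.prodCongr h.symm (LinearEquiv.refl D (D ⊗[C] (LinearMap.ker πC))))).trans <|
    (sw3 D (D ⊗[B] (LinearMap.ker πB)) (D ⊗[B] M) (D ⊗[C] (LinearMap.ker πC))).trans <|
    (LinearEquiv.prodCongr (LinearEquiv.refl D (D ⊗[C] (LinearMap.ker πC)))
      ((dxprod B M (LinearMap.ker πB)).symm.trans
        ((LinearEquiv.baseChange B D _ _ eB).symm.trans (pcan B C D (Fin nB))))).trans <|
    (dxprod C (LinearMap.ker πC) (Fin nB → C)).symm
  let H := pglue h hrest
  let EH : pker A H ≃ₗ[A] (pker A h × pker A hrest) :=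
    pkerProd A h hrest H (pglue_iff h hrest)
  let e : (M × (LinearMap.ker πB × (Fin nC → B))) ≃ₗ[B] ((Fin nB ⊕ Fin nC) → B) :=
    (LinearEquiv.prodAssoc B M (LinearMap.ker πB) (Fin nC → B)).symm.trans <|
    (LinearEquiv.prodCongr eB.symm (LinearEquiv.refl B (Fin nC → B))).trans <|
    (LinearEquiv.sumArrowLequivProdArrow (Fin nB) (Fin nC) B B).symm
  let f : (N × (LinearMap.ker πC × (Fin nB → C))) ≃ₗ[C] ((Fin nB ⊕ Fin nC) → C) :=
    (LinearEquiv.prodAssoc C N (LinearMap.ker πC) (Fin nB → C)).symm.trans <|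
    (LinearEquiv.prodCongr eC.symm (LinearEquiv.refl C (Fin nB → C))).trans <|
    ((LinearEquiv.sumArrowLequivProdArrow (Fin nC) (Fin nB) C C).symm.trans
      (LinearEquiv.piCongrLeft' C (fun _ => C) (Equiv.sumComm (Fin nC) (Fin nB))))
  let h2 : (D ⊗[B] ((Fin nB ⊕ Fin nC) → B)) ≃ₗ[D] (D ⊗[C] ((Fin nB ⊕ Fin nC) → C)) :=
    (LinearEquiv.baseChange B D _ _ e.symm).trans (H.trans (LinearEquiv.baseChange C D _ _ f))
  have hc2 : ∀ (m : M × (LinearMap.ker πB × (Fin nC → B)))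
      (n : N × (LinearMap.ker πC × (Fin nB → C))),
      H ((1:D) ⊗ₜ[B] m) = (1:D) ⊗ₜ[C] n ↔ h2 ((1:D) ⊗ₜ[B] (e m)) = (1:D) ⊗ₜ[C] (f n) := by
    intro m n
    have h1 : h2 ((1:D) ⊗ₜ[B] (e m)) =
        (LinearEquiv.baseChange C D _ _ f) (H ((1:D) ⊗ₜ[B] m)) := by
      show (LinearEquiv.baseChange C D _ _ f)
        (H ((LinearEquiv.baseChange B D _ _ e.symm) ((1:D) ⊗ₜ[B] (e m)))) = _
      rw [lbc_tmul, e.symm_apply_apply]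
    rw [h1]
    constructor
    · intro hh
      rw [hh, lbc_tmul]
    · intro hh
      apply (LinearEquiv.baseChange C D _ _ f).injective
      rw [hh, lbc_tmul]
  let Efree : pker A H ≃ₗ[A] pker A h2 := pkerCongr A e f H h2 hc2
  obtain ⟨hfin2, hproj2⟩ := pker_free_good A hfib hsurj h2
  have hfinH : Module.Finite A (pker A H) := Module.Finite.equiv Efree.symm
  have hprojH : Module.Projective A (pker A H) := Module.Projective.of_equiv Efree.symm
  have hfinP : Module.Finite A (pker A h × pker A hrest) := Module.Finite.equiv EH
  have hprojP : Module.Projective A (pker A h × pker A hrest) :=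
    Module.Projective.of_equiv EH
  constructor
  · exact Module.Finite.of_surjective
      (LinearMap.fst A (pker A h) (pker A hrest)) (fun x => ⟨(x, 0), rfl⟩)
  · exact Module.Projective.of_split
      (LinearMap.inl A (pker A h) (pker A hrest))
      (LinearMap.fst A (pker A h) (pker A hrest))
      (by ext x <;> rfl)

end Main
end Patch

/-- Landsburg's complex-level extension of Milnor patching.  Given a Milnor square
(`A ≅ B ×_D C`, `C → D` surjective), bounded cochain complexes `M` of finitely
generated projective `B`-modules and `N` of finitely generated projective
`C`-modules, and an isomorphism of complexes of `D`-modules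
`α : D ⊗[B] M ≅ D ⊗[C] N`, the degreewise kernel
`P i = ker(M i ⊕ N i → D ⊗[C] N i)` (with differential `d_M ⊕ d_N`, which
preserves the kernels) is a bounded complex of finitely generated projective
`A`-modules. -/
theorem landsburg_patching_complexes
    (A B C D : Type) [CommRing A] [CommRing B] [CommRing C] [CommRing D]
    [Algebra A B] [Algebra A C] [Algebra A D] [Algebra B D] [Algebra C D]
    [IsScalarTower A B D] [IsScalarTower A C D]
    (hfib : ∀ (b : B) (c : C), algebraMap B D b = algebraMap C D c →
      ∃! a : A, algebraMap A B a = b ∧ algebraMap A C a = c)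
    (hsurj : Function.Surjective (algebraMap C D))
    (M N : ℤ → Type)
    [∀ i, AddCommGroup (M i)] [∀ i, AddCommGroup (N i)]
    [∀ i, Module B (M i)] [∀ i, Module C (N i)]
    [∀ i, Module A (M i)] [∀ i, Module A (N i)]
    [∀ i, IsScalarTower A B (M i)] [∀ i, IsScalarTower A C (N i)]
    [∀ i, Module.Finite B (M i)] [∀ i, Module.Projective B (M i)]
    [∀ i, Module.Finite C (N i)] [∀ i, Module.Projective C (N i)]
    -- the differentials (a cochain complex structure)
    (dM : ∀ {i j : ℤ}, i + 1 = j → (M i →ₗ[B] M j))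
    (dN : ∀ {i j : ℤ}, i + 1 = j → (N i →ₗ[C] N j))
    (hdM : ∀ {i j p : ℤ} (h : i + 1 = j) (h' : j + 1 = p) (x : M i),
      dM h' (dM h x) = 0)
    (hdN : ∀ {i j p : ℤ} (h : i + 1 = j) (h' : j + 1 = p) (y : N i),
      dN h' (dN h y) = 0)
    -- boundedness
    (bdd : ∃ a b : ℤ, ∀ i : ℤ, i < a ∨ b < i → Subsingleton (M i) ∧ Subsingleton (N i))
    -- the gluing isomorphism of complexes of `D`-modules
    (α : ∀ i : ℤ, (D ⊗[B] M i) ≃ₗ[D] (D ⊗[C] N i))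
    (hα : ∀ {i j : ℤ} (h : i + 1 = j) (x : D ⊗[B] M i),
      α j (LinearMap.baseChange D (dM h) x) = LinearMap.baseChange D (dN h) (α i x))
    -- the degreewise patching maps
    (φ : ∀ i : ℤ, (M i × N i) →ₗ[A] (D ⊗[C] N i))
    (hφ : ∀ (i : ℤ) (p : M i × N i),
      φ i p = α i ((1 : D) ⊗ₜ[B] p.1) - (1 : D) ⊗ₜ[C] p.2) :
    (∀ i : ℤ, Module.Finite A (LinearMap.ker (φ i)) ∧
      Module.Projective A (LinearMap.ker (φ i))) ∧
    -- the differential preserves the kernels, so the kernels form a complex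
    (∀ {i j : ℤ} (h : i + 1 = j) (p : M i × N i), p ∈ LinearMap.ker (φ i) →
      (dM h p.1, dN h p.2) ∈ LinearMap.ker (φ j)) ∧
    -- and that complex is bounded
    (∃ a b : ℤ, ∀ i : ℤ, i < a ∨ b < i → Subsingleton (LinearMap.ker (φ i))) := by
  have hker : ∀ i : ℤ, LinearMap.ker (φ i) = pker A (α i) := by
    intro i
    ext p
    rw [LinearMap.mem_ker, hφ, sub_eq_zero]
    exact Iff.rfl
  refine ⟨?_, ?_, ?_⟩
  · intro i
    have hg := pker_good A hfib hsurj (α i)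
    rw [← hker i] at hg
    exact hg
  · intro i j hij p hp
    rw [LinearMap.mem_ker, hφ, sub_eq_zero] at hp ⊢
    show α j ((1:D) ⊗ₜ[B] (dM hij p.1)) = (1:D) ⊗ₜ[C] (dN hij p.2)
    have h1 : (1:D) ⊗ₜ[B] (dM hij p.1) = LinearMap.baseChange D (dM hij) ((1:D) ⊗ₜ[B] p.1) :=
      (LinearMap.baseChange_tmul _ _ _).symm
    rw [h1, hα, hp, LinearMap.baseChange_tmul]
  · obtain ⟨a, b, hb⟩ := bdd
    refine ⟨a, b, fun i hi => ?_⟩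
    obtain ⟨hM, hN⟩ := hb i hi
    exact ⟨fun x y => Subtype.ext (Subsingleton.elim _ _)⟩
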